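/- Let K be a nonarchimedean field with a discrete (nontrivial) valuation and let V be a K-Banach space with solid norm. Then V is isometrically isomorphic to a space c₀(E, K) for some index set E; i.e., every Banach space over a discretely valued field admits an orthogonal basis. -/

import Mathlib

open Filter Topology NNReal IsUltrametricDist

section Aux

variable {K : Type} [NontriviallyNormedField K]
variable {V : Type} [NormedAddCommGroup V] [NormedSpace K V]

/-- A set `X ⊆ V` is orthonormal if every finite linear combination of its elements has
norm equal to the sup of the norms of the coefficients. -/
def IsON (K : Type) [NontriviallyNormedField K] {V : Type} [NormedAddCommGroup V]
    [NormedSpace K V] (X : Set V) : Prop :=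
  ∀ s : Finset V, ↑s ⊆ X → ∀ a : V → K, ‖∑ x ∈ s, a x • x‖₊ = s.sup fun x => ‖a x‖₊

lemma isON_empty : IsON K (∅ : Set V) := by
  intro s hs a
  have : s = ∅ := Finset.coe_eq_empty.mp (Set.subset_empty_iff.mp hs)
  subst this; simp

lemma IsON.nnnorm_eq_one {X : Set V} (h : IsON K X) {x : V} (hx : x ∈ X) : ‖x‖₊ = 1 := by
  have := h {x} (by simpa using hx) (fun _ => (1 : K))
  simpa using this

lemma IsON.subtype {X : Set V} (h : IsON K X) (s : Finset ↥X) (a : ↥X → K) :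
    ‖∑ x ∈ s, a x • (x : V)‖₊ = s.sup fun x => ‖a x‖₊ := by
  classical
  set s' : Finset V := s.image ((↑) : ↥X → V) with hs'
  set a' : V → K := fun v => if hv : v ∈ X then a ⟨v, hv⟩ else 0 with ha'
  have hsub : ↑s' ⊆ X := by
    intro v hv
    simp only [hs', Finset.coe_image, Set.mem_image, Finset.mem_coe] at hv
    obtain ⟨x, -, rfl⟩ := hv
    exact x.2
  have hinj : Set.InjOn ((↑) : ↥X → V) ↑s := Subtype.val_injective.injOn
  have h1 : ∑ x ∈ s', a' x • x = ∑ x ∈ s, a x • (x : V) := by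
    rw [hs', Finset.sum_image hinj]
    refine Finset.sum_congr rfl fun x _ => ?_
    simp [ha', x.2]
  have h2 : (s'.sup fun x => ‖a' x‖₊) = s.sup fun x => ‖a x‖₊ := by
    rw [hs', Finset.sup_image]
    refine Finset.sup_congr rfl fun x _ => ?_
    simp [ha', x.2]
  calc ‖∑ x ∈ s, a x • (x : V)‖₊ = ‖∑ x ∈ s', a' x • x‖₊ := by rw [h1]
    _ = s'.sup fun x => ‖a' x‖₊ := h s' hsub a'
    _ = s.sup fun x => ‖a x‖₊ := h2

lemma nnnorm_comb_le [IsUltrametricDist V] (s : Finset V) (a : V → K)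
    (h1 : ∀ x ∈ s, ‖x‖₊ ≤ 1) :
    ‖∑ x ∈ s, a x • x‖₊ ≤ s.sup fun x => ‖a x‖₊ := by
  refine (Finset.nnnorm_sum_le_sup_nnnorm s _).trans ?_
  refine Finset.sup_mono_fun fun x hx => ?_
  rw [nnnorm_smul]
  simpa using mul_le_mul_right (h1 x hx) ‖a x‖₊

lemma exists_maximal_isON : ∃ X : Set V, Maximal (IsON K) X := by
  have := zorn_subset {X : Set V | IsON K X} ?_
  · obtain ⟨m, hm⟩ := this
    exact ⟨m, hm⟩
  · intro c hcS hc
    rcases c.eq_empty_or_nonempty with rfl | hne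
    · exact ⟨∅, isON_empty, by simp⟩
    · refine ⟨⋃₀ c, ?_, fun s hs => Set.subset_sUnion_of_mem hs⟩
      intro s hs a
      rw [Set.sUnion_eq_biUnion] at hs
      obtain ⟨Y, hYc, hsY⟩ :=
        (hc.directedOn).exists_mem_subset_of_finset_subset_biUnion hne hs
      exact hcS hYc s hsY a

/-- The key discreteness lemma: if `‖c‖ < ‖d‖` then `‖c‖ ≤ ‖π‖ * ‖d‖`. -/
lemma norm_le_mul_of_lt {π : K} (hπ0 : 0 < ‖π‖) (hπ1 : ‖π‖ < 1)
    (hval : ∀ x : K, x ≠ 0 → ∃ n : ℤ, ‖x‖ = ‖π‖ ^ n) {c d : K} (h : ‖c‖ < ‖d‖) :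
    ‖c‖ ≤ ‖π‖ * ‖d‖ := by
  rcases eq_or_ne c 0 with rfl | hc
  · have hd0 : 0 < ‖d‖ := lt_of_le_of_lt (norm_nonneg (0 : K)) h
    simp only [norm_zero]
    positivity
  have hd : d ≠ 0 := by
    rintro rfl
    rw [norm_zero] at h
    exact (norm_nonneg c).not_gt h
  obtain ⟨m, hm⟩ := hval c hc
  obtain ⟨n, hn⟩ := hval d hd
  rw [hm, hn] at h ⊢
  have hlt : n < m := (zpow_right_strictAnti₀ hπ0 hπ1).lt_iff_gt.mp h
  calc ‖π‖ ^ m ≤ ‖π‖ ^ (n + 1) :=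
        (zpow_right_strictAnti₀ hπ0 hπ1).le_iff_ge.mpr (by omega)
    _ = ‖π‖ * ‖π‖ ^ n := by rw [zpow_add_one₀ hπ0.ne', mul_comm]

lemma maximal_approx [IsUltrametricDist V] {X : Set V} (hX : Maximal (IsON K) X)
    {u : V} (hu : ‖u‖₊ = 1) : ∃ w ∈ Submodule.span K X, ‖u - w‖₊ < 1 := by
  classical
  by_cases huX : u ∈ X
  · exact ⟨u, Submodule.subset_span huX, by simp⟩
  have hnot : ¬ IsON K (insert u X) := by
    intro h
    exact huX (hX.2 h (Set.subset_insert u X) (Set.mem_insert u X))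
  rw [IsON] at hnot
  push_neg at hnot
  obtain ⟨s, hs, a, hne⟩ := hnot
  have hone : ∀ x ∈ s, ‖x‖₊ = 1 := by
    intro x hx
    rcases hs hx with rfl | hxX
    · exact hu
    · exact hX.1.nnnorm_eq_one hxX
  have hlt : ‖∑ x ∈ s, a x • x‖₊ < s.sup fun x => ‖a x‖₊ :=
    lt_of_le_of_ne (nnnorm_comb_le s a fun x hx => (hone x hx).le) hne
  by_cases hus : u ∈ s
  swap
  · -- s ⊆ X, contradiction with orthonormality of X
    have hsX : ↑s ⊆ X := by
      intro x hx
      rcases hs hx with rfl | hxX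
      · exact absurd hx hus
      · exact hxX
    exact absurd (hX.1 s hsX a) hlt.ne
  set s' : Finset V := s.erase u with hs'def
  have hs'X : ↑s' ⊆ X := by
    intro x hx
    have hxs : x ∈ s := Finset.mem_of_mem_erase (by exact_mod_cast hx)
    have hxu : x ≠ u := Finset.ne_of_mem_erase (by exact_mod_cast hx)
    rcases hs hxs with rfl | hxX
    · exact absurd rfl hxu
    · exact hxX
  have hins : s = insert u s' := (Finset.insert_erase hus).symm
  rw [hins, Finset.sum_insert (Finset.notMem_erase u s),
    Finset.sup_insert] at hlt
  have hM := hX.1 s' hs'X a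
  set M : ℝ≥0 := s'.sup fun x => ‖a x‖₊ with hMdef
  by_cases hau : a u = 0
  · rw [hau] at hlt
    simp only [zero_smul, zero_add, nnnorm_zero] at hlt
    have hz : (0 : ℝ≥0) ⊔ M = M := by simp
    rw [hz, hM] at hlt
    exact absurd hlt (lt_irrefl M)
  -- now a u ≠ 0
  have huu : ‖a u • u‖₊ = ‖a u‖₊ := by rw [nnnorm_smul, hu, mul_one]
  have hMle : M ≤ ‖a u‖₊ := by
    by_contra hcon
    push_neg at hcon
    have hne' : ‖a u • u‖₊ ≠ ‖∑ x ∈ s', a x • x‖₊ := by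
      rw [huu, hM]; exact hcon.ne
    have := nnnorm_add_eq_max_of_nnnorm_ne_nnnorm hne'
    rw [this, huu, hM] at hlt
    exact absurd hlt (lt_irrefl _)
  have hsup : (‖a u‖₊ ⊔ M) = ‖a u‖₊ := sup_eq_left.mpr hMle
  rw [hsup] at hlt
  refine ⟨-((a u)⁻¹ • ∑ x ∈ s', a x • x), ?_, ?_⟩
  · refine Submodule.neg_mem _ (Submodule.smul_mem _ _ (Submodule.sum_mem _ fun x hx => ?_))
    exact Submodule.smul_mem _ _ (Submodule.subset_span (hs'X hx))
  · have hrw : u - -((a u)⁻¹ • ∑ x ∈ s', a x • x)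
        = (a u)⁻¹ • (a u • u + ∑ x ∈ s', a x • x) := by
      rw [smul_add, inv_smul_smul₀ hau]
      abel
    rw [hrw, nnnorm_smul, nnnorm_inv]
    have hau0 : (0 : ℝ≥0) < ‖a u‖₊ := by simpa using hau
    calc ‖a u‖₊⁻¹ * ‖a u • u + ∑ x ∈ s', a x • x‖₊
        < ‖a u‖₊⁻¹ * ‖a u‖₊ := by
          exact mul_lt_mul_of_pos_left hlt (by positivity)
      _ = 1 := inv_mul_cancel₀ hau0.ne'

lemma mem_of_approx {W : Submodule K V} (hW : IsClosed (W : Set V)) {r : ℝ}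
    (hr0 : 0 ≤ r) (hr1 : r < 1)
    (happ : ∀ v : V, ∃ w ∈ W, ‖v - w‖ ≤ r * ‖v‖) (v : V) : v ∈ W := by
  choose g hgW hg using happ
  set u : ℕ → V := fun n => Nat.rec v (fun _ x => x - g x) n with hu
  have hus : ∀ n, u (n + 1) = u n - g (u n) := fun n => rfl
  have hnorm : ∀ n, ‖u n‖ ≤ r ^ n * ‖v‖ := by
    intro n
    induction n with
    | zero => simp [hu]
    | succ n ih =>
      rw [hus]
      calc ‖u n - g (u n)‖ ≤ r * ‖u n‖ := hg (u n)
        _ ≤ r * (r ^ n * ‖v‖) := by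
            exact mul_le_mul_of_nonneg_left ih hr0
        _ = r ^ (n + 1) * ‖v‖ := by ring
  have hmem : ∀ n, v - u n ∈ W := by
    intro n
    induction n with
    | zero => simp [hu]
    | succ n ih =>
      have : v - u (n + 1) = (v - u n) + g (u n) := by rw [hus]; abel
      rw [this]
      exact W.add_mem ih (hgW (u n))
  have hlim : Tendsto u atTop (𝓝 0) := by
    refine squeeze_zero_norm hnorm ?_
    have := (tendsto_pow_atTop_nhds_zero_of_lt_one hr0 hr1).mul_const ‖v‖
    simpa using this
  have hlim2 : Tendsto (fun n => v - u n) atTop (𝓝 v) := by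
    simpa using tendsto_const_nhds.sub hlim
  exact hW.mem_of_tendsto hlim2 (Eventually.of_forall hmem)

end Aux

/-- `K` is discretely valued: the value group of `K` is generated by a uniformizer. -/
def DiscretelyValued (K : Type) [NontriviallyNormedField K] : Prop :=
  ∃ π : K, 0 < ‖π‖ ∧ ‖π‖ < 1 ∧ ∀ x : K, x ≠ 0 → ∃ n : ℤ, ‖x‖ = ‖π‖ ^ n

/-- Every Banach space `V` with solid norm over a complete nonarchimedean
discretely valued field `K` is isometrically isomorphic to a space `c₀(E, K)` of `K`-valued
functions on a (discrete) index set `E` vanishing at infinity, with the sup norm; i.e., it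
admits an orthogonal basis. -/
theorem banach_space_is_c0
    (K : Type) [NontriviallyNormedField K] [CompleteSpace K] [IsUltrametricDist K]
    (hdv : DiscretelyValued K)
    (V : Type) [NormedAddCommGroup V] [NormedSpace K V] [CompleteSpace V]
    [IsUltrametricDist V]
    (hsolid : ∀ v : V, ∃ c : K, ‖v‖ = ‖c‖) :
    ∃ (E : Type) (_i : TopologicalSpace E), DiscreteTopology E ∧
      Nonempty (V ≃ₗᵢ[K] ZeroAtInftyContinuousMap E K) := by
  classical
  obtain ⟨π, hπ0, hπ1, hval⟩ := hdv
  obtain ⟨X, hX⟩ := exists_maximal_isON (K := K) (V := V)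
  letI : TopologicalSpace ↥X := ⊥
  haveI : DiscreteTopology ↥X := ⟨rfl⟩
  refine ⟨↥X, inferInstance, inferInstance, ?_⟩
  -- norms of elements of X
  have hXone : ∀ x : ↥X, ‖(x : V)‖₊ = 1 := fun x => hX.1.nnnorm_eq_one x.2
  -- summability
  have hsummable : ∀ f : ZeroAtInftyContinuousMap ↥X K,
      Summable fun x : ↥X => f x • (x : V) := by
    intro f
    have h1 : Tendsto f cofinite (𝓝 0) := by
      rw [← cocompact_eq_cofinite ↥X]
      exact zero_at_infty f
    have h2 : Tendsto (fun x : ↥X => ‖f x‖) cofinite (𝓝 0) := by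
      simpa [Function.comp_def] using (continuous_norm.tendsto (0 : K)).comp h1
    refine NonarchimedeanAddGroup.summable_of_tendsto_cofinite_zero ?_
    refine squeeze_zero_norm (fun x => ?_) h2
    rw [norm_smul]
    have h3 : ‖(x : V)‖ = 1 := by
      have := congrArg ((↑) : ℝ≥0 → ℝ) (hXone x)
      simpa using this
    rw [h3, mul_one]
  -- the linear map c₀(X, K) → V
  set Tlin : ZeroAtInftyContinuousMap ↥X K →ₗ[K] V :=
    { toFun := fun f => ∑' x : ↥X, f x • (x : V)
      map_add' := fun f g => by
        simp only [ZeroAtInftyContinuousMap.coe_add, Pi.add_apply, add_smul]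
        exact Summable.tsum_add (hsummable f) (hsummable g)
      map_smul' := fun c f => by
        simp only [ZeroAtInftyContinuousMap.coe_smul, Pi.smul_apply, smul_assoc,
          RingHom.id_apply]
        exact Summable.tsum_const_smul c (hsummable f) } with hTlin
  -- norm preservation
  have hnorm_map : ∀ f : ZeroAtInftyContinuousMap ↥X K, ‖Tlin f‖ = ‖f‖ := by
    intro f
    rcases eq_or_ne f 0 with rfl | hf
    · simp
    obtain ⟨x₀, hx₀⟩ : ∃ x, f x ≠ 0 := by
      by_contra hcon
      push_neg at hcon
      exact hf (DFunLike.ext _ _ fun x => by simpa using hcon x)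
    have hx₀pos : (0 : ℝ) < ‖f x₀‖ := norm_pos_iff.mpr hx₀
    have h1 : Tendsto f cofinite (𝓝 0) := by
      rw [← cocompact_eq_cofinite ↥X]
      exact zero_at_infty f
    have hfin : {x : ↥X | ‖f x₀‖ ≤ ‖f x‖}.Finite := by
      have hev : ∀ᶠ x in cofinite, ‖f x‖ < ‖f x₀‖ := by
        have := h1.eventually (Metric.ball_mem_nhds (0 : K) hx₀pos)
        filter_upwards [this] with x hx
        simpa [dist_eq_norm] using hx
      have := eventually_cofinite.mp hev
      refine this.subset fun x hx => ?_
      simpa using hx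
    set t : Finset ↥X := hfin.toFinset with ht
    have hx₀t : x₀ ∈ t := by simp [ht]
    set M : ℝ≥0 := t.sup fun x => ‖f x‖₊ with hM
    have hbound : ∀ x : ↥X, ‖f x‖₊ ≤ M := by
      intro x
      by_cases hx : ‖f x₀‖ ≤ ‖f x‖
      · refine Finset.le_sup (f := fun x => ‖f x‖₊) ?_
        rw [ht, Set.Finite.mem_toFinset]
        exact hx
      · push_neg at hx
        calc ‖f x‖₊ ≤ ‖f x₀‖₊ := by exact_mod_cast hx.le
          _ ≤ M := Finset.le_sup (f := fun x => ‖f x‖₊) hx₀t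
    have hM0 : (0 : ℝ≥0) < M := lt_of_lt_of_le (nnnorm_pos.mpr hx₀) (hbound x₀)
    have hfnorm : ‖f‖₊ = M := by
      refine le_antisymm ?_ ?_
      · have : ‖f‖ ≤ (M : ℝ) := by
          rw [← ZeroAtInftyContinuousMap.norm_toBCF_eq_norm]
          refine (BoundedContinuousFunction.norm_le M.coe_nonneg).mpr fun x => ?_
          exact_mod_cast hbound x
        exact_mod_cast this
      · obtain ⟨x, hxt, hMx⟩ := Finset.exists_mem_eq_sup t ⟨x₀, hx₀t⟩ fun x => ‖f x‖₊
        rw [hM, hMx]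
        have : ‖f x‖ ≤ ‖f‖ := by
          rw [← ZeroAtInftyContinuousMap.norm_toBCF_eq_norm]
          exact f.toBCF.norm_coe_le_norm x
        exact_mod_cast this
    -- split into head and tail
    have hsum := hsummable f
    have hsplit := Summable.tsum_add_tsum_compl (s := (↑t : Set ↥X))
      (hsum.subtype _) (hsum.subtype _)
    have hhead_eq : ∑' x : (↑t : Set ↥X), f x • ((x : ↥X) : V)
        = ∑ x ∈ t, f x • (x : V) := Finset.tsum_subtype t fun x => f x • (x : V)
    have hhead : ‖∑ x ∈ t, f x • (x : V)‖₊ = M := by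
      have := hX.1.subtype t fun x => f x
      exact this
    have htail : ‖∑' x : ↥((↑t : Set ↥X)ᶜ), f x • ((x : ↥X) : V)‖₊ ≤ ‖π‖₊ * M := by
      refine nnnorm_tsum_le_of_forall_le fun x => ?_
      have hxt : (x : ↥X) ∉ t := by
        have h4 := x.2
        rw [Set.mem_compl_iff, Finset.mem_coe] at h4
        exact h4
      have hxlt : ‖f x‖ < ‖f x₀‖ := by
        by_contra hcon
        push_neg at hcon
        exact hxt (by simp [ht, hcon])
      have key : ‖f (x : ↥X)‖ ≤ ‖π‖ * ‖f x₀‖ := norm_le_mul_of_lt hπ0 hπ1 hval hxlt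
      have hfx₀M : (‖f x₀‖₊ : ℝ≥0) ≤ M := hbound x₀
      rw [nnnorm_smul, hXone x, mul_one]
      have : ‖f (x : ↥X)‖₊ ≤ ‖π‖₊ * ‖f x₀‖₊ := by exact_mod_cast key
      exact this.trans (mul_le_mul_right hfx₀M _)
    have hπM : ‖π‖₊ * M < M := by
      have hπlt : ‖π‖₊ < 1 := by exact_mod_cast hπ1
      exact mul_lt_of_lt_one_left hM0 hπlt
    have hTf : ‖Tlin f‖₊ = M := by
      have hTlinf : Tlin f = ∑ x ∈ t, f x • (x : V)
          + ∑' x : ↥((↑t : Set ↥X)ᶜ), f x • ((x : ↥X) : V) := by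
        rw [hTlin]
        simp only [LinearMap.coe_mk, AddHom.coe_mk]
        rw [← hsplit, hhead_eq]
      rw [hTlinf]
      have hne : ‖∑ x ∈ t, f x • (x : V)‖₊
          ≠ ‖∑' x : ↥((↑t : Set ↥X)ᶜ), f x • ((x : ↥X) : V)‖₊ := by
        rw [hhead]
        exact (lt_of_le_of_lt htail hπM).ne'
      rw [nnnorm_add_eq_max_of_nnnorm_ne_nnnorm hne, hhead]
      exact max_eq_left ((htail.trans hπM.le))
    calc ‖Tlin f‖ = ((‖Tlin f‖₊ : ℝ≥0) : ℝ) := rfl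
      _ = ((M : ℝ≥0) : ℝ) := by rw [hTf]
      _ = ‖f‖ := by rw [← hfnorm]; rfl
  set T : ZeroAtInftyContinuousMap ↥X K →ₗᵢ[K] V := ⟨Tlin, hnorm_map⟩ with hT
  -- surjectivity
  have hclosed : IsClosed (Set.range T) :=
    (T.isometry.isClosedEmbedding).isClosed_range
  set W : Submodule K V := LinearMap.range Tlin with hW
  have hWrange : (W : Set V) = Set.range T := by
    rw [hW]
    rfl
  have hWclosed : IsClosed (W : Set V) := hWrange ▸ hclosed
  have hXW : X ⊆ ↑W := by
    intro x hx
    set g : ZeroAtInftyContinuousMap ↥X K :=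
      { toFun := fun y => if y = ⟨x, hx⟩ then (1 : K) else 0
        continuous_toFun := continuous_of_discreteTopology
        zero_at_infty' := by
          rw [cocompact_eq_cofinite ↥X]
          refine tendsto_nhds_of_eventually_eq ?_
          rw [eventually_cofinite]
          refine Set.Finite.subset (Set.finite_singleton ⟨x, hx⟩) fun y hy => ?_
          by_contra hyx
          exact hy (if_neg hyx) } with hg
    refine ⟨g, ?_⟩
    have : Tlin g = x := by
      rw [hTlin]
      simp only [LinearMap.coe_mk, AddHom.coe_mk]
      rw [tsum_eq_single (⟨x, hx⟩ : ↥X) ?_]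
      · simp [hg]
      · intro y hy
        simp [hg, if_neg hy]
    exact this
  have hspanW : Submodule.span K X ≤ W := Submodule.span_le.mpr hXW
  have happrox : ∀ v : V, ∃ w ∈ W, ‖v - w‖ ≤ ‖π‖ * ‖v‖ := by
    intro v
    rcases eq_or_ne v 0 with rfl | hv
    · exact ⟨0, W.zero_mem, by simp⟩
    obtain ⟨c, hc⟩ := hsolid v
    have hc0 : c ≠ 0 := by
      intro h
      rw [h, norm_zero] at hc
      exact hv (norm_eq_zero.mp hc)
    set u : V := c⁻¹ • v with hu
    have hun : ‖u‖₊ = 1 := by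
      rw [hu, nnnorm_smul, nnnorm_inv]
      have : ‖v‖₊ = ‖c‖₊ := NNReal.coe_injective (by simpa using hc)
      rw [this, inv_mul_cancel₀ (by simpa using hc0)]
    obtain ⟨w₀, hw₀span, hw₀⟩ := maximal_approx hX hun
    obtain ⟨d, hd⟩ := hsolid (u - w₀)
    have hd1 : ‖d‖ < 1 := by
      have h1 : ‖u - w₀‖ < 1 := by exact_mod_cast hw₀
      rw [hd] at h1
      exact h1
    have hd1' : ‖d‖ < ‖(1 : K)‖ := by simpa using hd1
    have hkey : ‖u - w₀‖ ≤ ‖π‖ := by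
      rw [hd]
      simpa using norm_le_mul_of_lt hπ0 hπ1 hval hd1'
    refine ⟨c • w₀, hspanW (Submodule.smul_mem _ _ hw₀span), ?_⟩
    have hvc : v = c • u := by rw [hu, smul_inv_smul₀ hc0]
    calc ‖v - c • w₀‖ = ‖c • (u - w₀)‖ := by rw [hvc, ← smul_sub]
      _ = ‖c‖ * ‖u - w₀‖ := norm_smul c (u - w₀)
      _ ≤ ‖c‖ * ‖π‖ := by
          exact mul_le_mul_of_nonneg_left hkey (norm_nonneg c)
      _ = ‖π‖ * ‖v‖ := by rw [hc]; ring
  have hsurj : Function.Surjective T := by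
    intro v
    have : v ∈ W := mem_of_approx hWclosed hπ0.le hπ1 happrox v
    exact this
  exact ⟨(LinearIsometryEquiv.ofSurjective T hsurj).symm⟩
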